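/- Let M be an atomic reduced cancellative monoid whose set of atoms H admits a stratification H = H₁ ∪ ... ∪ H_k satisfying additionally: for each i and distinct q,q' ∈ H_i, q and q' are coprime in M_i = ⟨H_i ∪ ... ∪ H_k⟩. Then each x ∈ M has a unique representation x = h₁ + ... + h_k with h_i ∈ ⟨H_i⟩ and h_i + ... + h_k ∈ Ap(M, H₁ ∪ ... ∪ H_{i−1}) for i ≥ 2. -/

import Mathlib

/-- `x ≤_M y` : divisibility in the additive monoid `M`. -/
def MDvd {M : Type*} [AddCancelCommMonoid M] (x y : M) : Prop := ∃ z : M, y = x + z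

/-- Divisibility inside a submonoid `N` of `M`. -/
def NDvd {M : Type*} [AddCancelCommMonoid M] (N : AddSubmonoid M) (x y : M) : Prop :=
  ∃ z ∈ N, y = x + z

/-- An atom: a nonzero element that is not the sum of two nonzero elements. -/
def IsAtomM {M : Type*} [AddCancelCommMonoid M] (a : M) : Prop :=
  a ≠ 0 ∧ ∀ b c : M, a = b + c → b = 0 ∨ c = 0

/-- `M` is atomic: every element is a finite sum of atoms. -/
def AtomicM (M : Type*) [AddCancelCommMonoid M] : Prop :=
  ∀ x : M, ∃ l : Multiset M, (∀ a ∈ l, IsAtomM a) ∧ l.sum = x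

/-- The Apéry set `Ap(M,X) = M \ (X + M)`. -/
def AperyM {M : Type*} [AddCancelCommMonoid M] (X : Set M) : Set M :=
  {x | ∀ q ∈ X, ¬ MDvd q x}

/-- The sum `Σ_{q ∈ Q} λ_q q` encoded by a finitely supported function. -/
def fsum {M : Type*} [AddCancelCommMonoid M] (f : M →₀ ℕ) : M :=
  f.sum fun q n => n • q

/-- `⟨Q⟩` is factorial, freely generated by `Q`. -/
def FreeOn {M : Type*} [AddCancelCommMonoid M] (Q : Set M) : Prop :=
  ∀ f g : M →₀ ℕ, (f.support : Set M) ⊆ Q → (g.support : Set M) ⊆ Q →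
    fsum f = fsum g → f = g

/-- `Q` is linked to the submonoid `N` of `M`. -/
def LinkedIn {M : Type*} [AddCancelCommMonoid M] (N : AddSubmonoid M) (Q : Set M) :
    Prop :=
  ∀ x ∈ N, x ≠ 0 → ∃ c : ℕ, ∀ f : M →₀ ℕ, (f.support : Set M) ⊆ Q →
    NDvd N (fsum f) x → (f.sum fun _ n => n) ≤ c

/-- `x` is coprime with `y` in the submonoid `N`. -/
def CoprimeIn {M : Type*} [AddCancelCommMonoid M] (N : AddSubmonoid M) (x y : M) :
    Prop :=
  ¬ NDvd N x y ∧ ∀ m ∈ N, NDvd N x (m + y) → NDvd N x m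

section Helpers
variable {M : Type*} [AddCancelCommMonoid M]

lemma fsum_zero : fsum (0 : M →₀ ℕ) = 0 := Finsupp.sum_zero_index

lemma fsum_add (f g : M →₀ ℕ) : fsum (f + g) = fsum f + fsum g :=
  Finsupp.sum_add_index' (fun q => zero_smul ℕ q) (fun q m n => add_nsmul q m n)

lemma fsum_single (q : M) : fsum (Finsupp.single q 1) = q := by
  rw [fsum, Finsupp.sum_single_index (zero_smul ℕ q), one_smul]

lemma fsum_mem {S : Set M} {N : AddSubmonoid M} (hS : S ⊆ N) (f : M →₀ ℕ)
    (hf : (f.support : Set M) ⊆ S) : fsum f ∈ N :=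
  AddSubmonoid.sum_mem _ fun q hq => AddSubmonoid.nsmul_mem _ (hS (hf hq)) _

lemma mem_closure_iff_fsum {S : Set M} {x : M} :
    x ∈ AddSubmonoid.closure S ↔ ∃ f : M →₀ ℕ, (f.support : Set M) ⊆ S ∧ fsum f = x := by
  constructor
  · intro hx
    induction hx using AddSubmonoid.closure_induction with
    | mem y hy => exact ⟨Finsupp.single y 1, by
        intro a ha
        have := Finsupp.support_single_subset (a := y) (b := 1) ha
        simp only [Finset.mem_singleton] at this
        simpa [this] , fsum_single y⟩
    | zero => exact ⟨0, by simp, fsum_zero⟩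
    | add a b ha hb iha ihb =>
      classical
      obtain ⟨f, hf, rfl⟩ := iha
      obtain ⟨g, hg, rfl⟩ := ihb
      exact ⟨f + g, fun q hq => by
        rcases Finset.mem_union.1 (Finsupp.support_add hq) with h | h
        exacts [hf h, hg h], fsum_add f g⟩
  · rintro ⟨f, hf, rfl⟩
    exact fsum_mem AddSubmonoid.subset_closure f hf

def wtF {M : Type*} [AddCancelCommMonoid M] (f : M →₀ ℕ) : ℕ := f.sum fun _ n => n

lemma wtF_add (f g : M →₀ ℕ) : wtF (f + g) = wtF f + wtF g :=
  Finsupp.sum_add_index' (fun _ => rfl) (fun _ _ _ => rfl)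

lemma wtF_eq_zero {f : M →₀ ℕ} (h : wtF f = 0) : f = 0 := by
  ext a
  by_cases ha : a ∈ f.support
  · have := (Finset.sum_eq_zero_iff.1 h) a ha
    simpa using this
  · simpa using Finsupp.notMem_support_iff.1 ha

lemma split_single {f : M →₀ ℕ} {q : M} (hq : q ∈ f.support) :
    f = Finsupp.single q 1 + (f - Finsupp.single q 1) ∧
    ((f - Finsupp.single q 1).support : Set M) ⊆ (f.support : Set M) ∧
    wtF f = wtF (f - Finsupp.single q 1) + 1 := by
  have hfq : 1 ≤ f q := Nat.one_le_iff_ne_zero.2 (Finsupp.mem_support_iff.1 hq)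
  have heq : f = Finsupp.single q 1 + (f - Finsupp.single q 1) := by
    ext a
    by_cases ha : a = q
    · subst ha; simp [Finsupp.tsub_apply]; omega
    · simp [Finsupp.single_apply, Ne.symm ha, ha, Finsupp.tsub_apply]
  refine ⟨heq, ?_, ?_⟩
  · intro a ha
    simp only [Finset.mem_coe, Finsupp.mem_support_iff, Finsupp.tsub_apply] at ha ⊢
    intro h0
    apply ha
    simp [h0]
  · have h1 : wtF (Finsupp.single q 1) = 1 := by
      unfold wtF
      rw [Finsupp.sum_single_index rfl]
    conv_lhs => rw [heq]
    rw [wtF_add, h1, add_comm]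

end Helpers

section KeyLemma
variable {M : Type*} [AddCancelCommMonoid M]

lemma ndvd_mdvd {N : AddSubmonoid M} {x y : M} (h : NDvd N x y) : MDvd x y := by
  obtain ⟨z, _, hz⟩ := h; exact ⟨z, hz⟩

lemma peel {N : AddSubmonoid M} {Q : Set M} (hQN : Q ⊆ N)
    (hcop : ∀ q ∈ Q, ∀ q' ∈ Q, q ≠ q' → CoprimeIn N q q') {q : M} (hq : q ∈ Q) :
    ∀ n (g : M →₀ ℕ), wtF g = n → (g.support : Set M) ⊆ Q → q ∉ g.support →
      ∀ v ∈ N, NDvd N q (fsum g + v) → NDvd N q v := by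
  intro n
  induction n with
  | zero =>
    intro g hw _ _ v _ hdvd
    rw [wtF_eq_zero hw] at hdvd
    rwa [fsum_zero, zero_add] at hdvd
  | succ n ih =>
    intro g hw hsupp hqg v hv hdvd
    have hne : g.support.Nonempty := by
      rcases Finset.eq_empty_or_nonempty g.support with h | h
      · exfalso; rw [Finsupp.support_eq_empty.1 h] at hw
        simp [wtF] at hw
      · exact h
    obtain ⟨q', hq'⟩ := hne
    have hq'Q : q' ∈ Q := hsupp hq'
    have hqq' : q ≠ q' := fun h => hqg (h ▸ hq')
    obtain ⟨heq, hsub, hwt⟩ := split_single hq'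
    set g' := g - Finsupp.single q' 1 with hg'
    have hfg : fsum g = q' + fsum g' := by
      conv_lhs => rw [heq]
      rw [fsum_add, fsum_single]
    have hg'supp : (g'.support : Set M) ⊆ Q := fun a ha => hsupp (hsub ha)
    have hg'N : fsum g' ∈ N := fsum_mem hQN g' hg'supp
    have hmN : fsum g' + v ∈ N := N.add_mem hg'N hv
    have hdvd' : NDvd N q ((fsum g' + v) + q') := by
      rwa [hfg, add_comm q' (fsum g'), add_right_comm] at hdvd
    have hstep : NDvd N q (fsum g' + v) := (hcop q hq q' hq'Q hqq').2 _ hmN hdvd'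
    exact ih g' (by omega) hg'supp (fun h => hqg (hsub h)) v hv hstep

lemma keyCancel {N : AddSubmonoid M} {Q : Set M} (hQN : Q ⊆ N)
    (hcop : ∀ q ∈ Q, ∀ q' ∈ Q, q ≠ q' → CoprimeIn N q q') :
    ∀ n (f g : M →₀ ℕ), wtF f = n → (f.support : Set M) ⊆ Q → (g.support : Set M) ⊆ Q →
      ∀ u v : M, u ∈ N → v ∈ N → (∀ q ∈ Q, ¬ MDvd q u) → (∀ q ∈ Q, ¬ MDvd q v) →
      fsum f + u = fsum g + v → f = g ∧ u = v := by
  intro n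
  induction n with
  | zero =>
    intro f g hw hf hg u v hu hv hAu hAv heq
    have hf0 : f = 0 := wtF_eq_zero hw
    subst hf0
    rw [fsum_zero, zero_add] at heq
    have hg0 : g = 0 := by
      by_contra hg0
      have hne : g.support.Nonempty := Finsupp.support_nonempty_iff.2 hg0
      obtain ⟨q', hq'⟩ := hne
      obtain ⟨hsplit, _, _⟩ := split_single hq'
      refine hAu q' (hg hq') ⟨fsum (g - Finsupp.single q' 1) + v, ?_⟩
      rw [heq]
      conv_lhs => rw [hsplit]
      rw [fsum_add, fsum_single, add_assoc]
    subst hg0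
    rw [fsum_zero, zero_add] at heq
    exact ⟨rfl, heq⟩
  | succ n ih =>
    intro f g hw hf hg u v hu hv hAu hAv heq
    have hne : f.support.Nonempty := by
      rcases Finset.eq_empty_or_nonempty f.support with h | h
      · exfalso; rw [Finsupp.support_eq_empty.1 h] at hw; simp [wtF] at hw
      · exact h
    obtain ⟨q, hqf⟩ := hne
    have hqQ : q ∈ Q := hf hqf
    obtain ⟨hfsplit, hfsub, hfwt⟩ := split_single hqf
    set f' := f - Finsupp.single q 1 with hf'
    have hf'supp : (f'.support : Set M) ⊆ Q := fun a ha => hf (hfsub ha)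
    have hff : fsum f = q + fsum f' := by
      conv_lhs => rw [hfsplit]; rw [fsum_add, fsum_single]
    have hdvd : NDvd N q (fsum g + v) :=
      ⟨fsum f' + u, N.add_mem (fsum_mem hQN f' hf'supp) hu, by
        rw [← heq, hff, add_assoc]⟩
    have hqg : q ∈ g.support := by
      by_contra hqg
      exact hAv q hqQ (ndvd_mdvd
        (peel hQN hcop hqQ (wtF g) g rfl hg hqg v hv hdvd))
    obtain ⟨hgsplit, hgsub, hgwt⟩ := split_single hqg
    set g' := g - Finsupp.single q 1 with hg'
    have hg'supp : (g'.support : Set M) ⊆ Q := fun a ha => hg (hgsub ha)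
    have hgg : fsum g = q + fsum g' := by
      conv_lhs => rw [hgsplit]; rw [fsum_add, fsum_single]
    have heq' : fsum f' + u = fsum g' + v := by
      have : q + (fsum f' + u) = q + (fsum g' + v) := by
        rw [← add_assoc, ← add_assoc, ← hff, ← hgg]; exact heq
      exact add_left_cancel this
    obtain ⟨hfg, huv⟩ := ih f' g' (by omega) hf'supp hg'supp u v hu hv hAu hAv heq'
    refine ⟨?_, huv⟩
    rw [hfsplit, hgsplit, hfg]

end KeyLemma

section Main
variable {M : Type*} [AddCancelCommMonoid M]

lemma mdvd_of_mem_multiset {a : M} {l : Multiset M} (h : a ∈ l) : MDvd a l.sum := by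
  classical
  exact ⟨(l.erase a).sum, by rw [← Multiset.sum_cons, Multiset.cons_erase h]⟩

lemma not_mdvd_zero (hred : ∀ a b : M, a + b = 0 → a = 0) {q : M} (hq : q ≠ 0) :
    ¬ MDvd q 0 := fun ⟨z, hz⟩ => hq (hred q z hz.symm)

lemma eq_zero_of_no_atom_dvd (hatomic : AtomicM M) (x : M)
    (h : ∀ q : M, IsAtomM q → ¬ MDvd q x) : x = 0 := by
  obtain ⟨l, hl, rfl⟩ := hatomic x
  by_cases h0 : l = 0
  · simp [h0]
  · obtain ⟨a, ha⟩ := Multiset.exists_mem_of_ne_zero h0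
    exact absurd (mdvd_of_mem_multiset ha) (h a (hl a ha))

variable {k : ℕ} {Hs : Fin k → Set M}

lemma atom_of_mem_Hs (hunion : (⋃ i, Hs i) = {a : M | IsAtomM a}) {j : Fin k} {q : M}
    (hq : q ∈ Hs j) : IsAtomM q := by
  have : q ∈ ⋃ i, Hs i := Set.mem_iUnion.2 ⟨j, hq⟩
  rwa [hunion] at this

lemma mem_Mi (hatomic : AtomicM M) (hunion : (⋃ i, Hs i) = {a : M | IsAtomM a})
    (i : Fin k) (x : M) (hx : ∀ j : Fin k, j < i → ∀ q ∈ Hs j, ¬ MDvd q x) :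
    x ∈ AddSubmonoid.closure (⋃ j ∈ {j : Fin k | i ≤ j}, Hs j) := by
  obtain ⟨l, hl, rfl⟩ := hatomic x
  refine AddSubmonoid.multiset_sum_mem _ l (fun a ha => ?_)
  have hatom : IsAtomM a := hl a ha
  have : a ∈ ⋃ i, Hs i := by rw [hunion]; exact hatom
  obtain ⟨j, hj⟩ := Set.mem_iUnion.1 this
  rcases lt_or_ge j i with hji | hij
  · exact absurd (mdvd_of_mem_multiset ha) (hx j hji a hj)
  · exact AddSubmonoid.subset_closure (Set.mem_biUnion hij hj)

lemma step_lemma (hred : ∀ a b : M, a + b = 0 → a = 0) (hatomic : AtomicM M)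
    (hunion : (⋃ i, Hs i) = {a : M | IsAtomM a})
    (hlink : ∀ i : Fin k,
      LinkedIn (AddSubmonoid.closure (⋃ j ∈ {j : Fin k | i ≤ j}, Hs j)) (Hs i))
    (i : Fin k) (x : M)
    (hx : ∀ j : Fin k, j < i → ∀ q ∈ Hs j, ¬ MDvd q x) :
    ∃ hm z : M, hm ∈ AddSubmonoid.closure (Hs i) ∧ x = hm + z ∧
      ∀ j : Fin k, j ≤ i → ∀ q ∈ Hs j, ¬ MDvd q z := by
  classical
  set N := AddSubmonoid.closure (⋃ j ∈ {j : Fin k | i ≤ j}, Hs j) with hN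
  by_cases hx0 : x = 0
  · refine ⟨0, 0, AddSubmonoid.zero_mem _, by simp [hx0], fun j _ q hq => ?_⟩
    exact not_mdvd_zero hred (atom_of_mem_Hs hunion hq).1
  -- the bound
  obtain ⟨c, hc⟩ := hlink i x (mem_Mi hatomic hunion i x hx) hx0
  -- complements are in N
  have hcompl : ∀ f : M →₀ ℕ, ∀ z : M, x = fsum f + z → z ∈ N := by
    intro f z hz
    refine mem_Mi hatomic hunion i z (fun j hj q hq hdvd => ?_)
    obtain ⟨w, hw⟩ := hdvd
    exact hx j hj q hq ⟨fsum f + w, by rw [hz, hw]; abel⟩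
  have hbound : ∀ f : M →₀ ℕ, (f.support : Set M) ⊆ Hs i → MDvd (fsum f) x → wtF f ≤ c := by
    intro f hf ⟨z, hz⟩
    exact hc f hf ⟨z, hcompl f z hz, hz⟩
  set P : ℕ → Prop := fun n => ∃ f : M →₀ ℕ, (f.support : Set M) ⊆ Hs i ∧
    MDvd (fsum f) x ∧ wtF f = n with hP
  have hP0 : P 0 := ⟨0, by simp, ⟨x, by rw [fsum_zero, zero_add]⟩, by simp [wtF]⟩
  have hPb : ∀ n, P n → n ≤ c := by
    rintro n ⟨f, hf, hdvd, rfl⟩; exact hbound f hf hdvd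
  set n0 := Nat.findGreatest P c with hn0
  have hPn0 : P n0 := Nat.findGreatest_spec (Nat.zero_le c) hP0
  obtain ⟨f, hf, ⟨z, hz⟩, hwf⟩ := hPn0
  refine ⟨fsum f, z, mem_closure_iff_fsum.2 ⟨f, hf, rfl⟩, hz, ?_⟩
  intro j hj q hq hdvd
  rcases lt_or_eq_of_le hj with hji | heq
  · obtain ⟨w, hw⟩ := hdvd
    exact hx j hji q hq ⟨fsum f + w, by rw [hz, hw]; abel⟩
  · -- q ∈ Hs i divides z : contradict maximality
    rw [heq] at hq
    obtain ⟨w, hw⟩ := hdvd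
    have hsupp : ((f + Finsupp.single q 1).support : Set M) ⊆ Hs i := by
      intro a ha
      rcases Finset.mem_union.1 (Finsupp.support_add ha) with h | h
      · exact hf h
      · have := Finsupp.support_single_subset h
        simp only [Finset.mem_singleton] at this
        rwa [this]
    have hdvd' : MDvd (fsum (f + Finsupp.single q 1)) x :=
      ⟨w, by rw [fsum_add, fsum_single, hz, hw]; abel⟩
    have hPn1 : P (n0 + 1) := ⟨f + Finsupp.single q 1, hsupp, hdvd', by
      rw [wtF_add, hwf]
      simp [wtF, Finsupp.sum_single_index]⟩
    have hle : n0 + 1 ≤ c := hPb _ hPn1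
    exact Nat.findGreatest_is_greatest (by omega) hle hPn1

end Main

section Build
variable {M : Type*} [AddCancelCommMonoid M] {k : ℕ} {Hs : Fin k → Set M}

/-- The index set `{j | n ≤ j}`. -/
def Sn (k n : ℕ) : Finset (Fin k) := Finset.univ.filter (fun j => n ≤ (j : ℕ))

lemma mem_Sn {n : ℕ} {j : Fin k} : j ∈ Sn k n ↔ n ≤ (j : ℕ) := by simp [Sn]

lemma Sn_eq_filter (i : Fin k) :
    Sn k (i : ℕ) = Finset.univ.filter (fun j => i ≤ j) := by
  ext j
  simp only [Sn, Finset.mem_filter, Finset.mem_univ, true_and, Fin.le_def]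

lemma Sn_zero : Sn k 0 = Finset.univ := by ext j; simp [Sn]

lemma Sn_empty {n : ℕ} (hn : k ≤ n) : Sn k n = ∅ := by
  ext j; simp only [mem_Sn, Finset.notMem_empty, iff_false]
  omega

lemma Sn_insert {n : ℕ} (hn : n < k) :
    Sn k n = insert (⟨n, hn⟩ : Fin k) (Sn k (n + 1)) ∧
      (⟨n, hn⟩ : Fin k) ∉ Sn k (n + 1) := by
  constructor
  · ext j
    simp only [mem_Sn, Finset.mem_insert]
    constructor
    · intro h
      rcases eq_or_lt_of_le h with h | h
      · left; exact Fin.ext h.symm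
      · right; omega
    · rintro (rfl | h)
      · exact le_refl _
      · omega
  · simp only [mem_Sn]; omega

lemma exists_tail (hred : ∀ a b : M, a + b = 0 → a = 0) (hatomic : AtomicM M)
    (hunion : (⋃ i, Hs i) = {a : M | IsAtomM a})
    (hlink : ∀ i : Fin k,
      LinkedIn (AddSubmonoid.closure (⋃ j ∈ {j : Fin k | i ≤ j}, Hs j)) (Hs i)) :
    ∀ t m : ℕ, k ≤ m + t → ∀ x : M,
      (∀ j : Fin k, (j : ℕ) < m → ∀ q ∈ Hs j, ¬ MDvd q x) →
      ∃ h : Fin k → M, (∀ j, h j ∈ AddSubmonoid.closure (Hs j)) ∧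
        (∀ j : Fin k, (j : ℕ) < m → h j = 0) ∧ x = ∑ j, h j ∧
        ∀ n : ℕ, ∀ j : Fin k, (j : ℕ) < n → ∀ q ∈ Hs j,
          ¬ MDvd q (∑ j ∈ Sn k n, h j) := by
  intro t
  induction t with
  | zero =>
    intro m hm x hx
    have hx0 : x = 0 := by
      refine eq_zero_of_no_atom_dvd hatomic x (fun q hq => ?_)
      have : q ∈ ⋃ i, Hs i := by rw [hunion]; exact hq
      obtain ⟨j, hj⟩ := Set.mem_iUnion.1 this
      exact hx j (by omega) q hj
    refine ⟨fun _ => 0, fun j => AddSubmonoid.zero_mem _, fun j _ => rfl,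
      by simp [hx0], fun n j hj q hq => ?_⟩
    rw [Finset.sum_const_zero]
    exact not_mdvd_zero hred (atom_of_mem_Hs hunion hq).1
  | succ t ih =>
    intro m hm x hx
    by_cases hkm : k ≤ m + t
    · exact ih m hkm x hx
    have hmk : m < k := by omega
    set i : Fin k := ⟨m, hmk⟩ with hi
    obtain ⟨e, z, heC, hez, hz⟩ := step_lemma hred hatomic hunion hlink i x
      (fun j hj q hq => hx j (by rw [Fin.lt_def] at hj; exact hj) q hq)
    obtain ⟨h', hC', h0', hsum', htail'⟩ := ih (m + 1) (by omega) z
      (fun j hj q hq => hz j (by rw [Fin.le_def]; exact Nat.lt_succ_iff.mp hj) q hq)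
    classical
    set h : Fin k → M := Function.update h' i e with hh
    have hupd : ∀ j : Fin k, j ≠ i → h j = h' j := fun j hj =>
      Function.update_of_ne hj e h'
    have h'i : h' i = 0 := h0' i (Nat.lt_succ_self m)
    -- sums over Sn n for n ≤ m
    have hSn : ∀ n : ℕ, n ≤ m → ∑ j ∈ Sn k n, h j = x := by
      intro n hn
      have hiSn : i ∈ Sn k n := mem_Sn.2 (show n ≤ m from hn)
      rw [hh, Finset.sum_update_of_mem hiSn]
      have : ∑ j ∈ Sn k n \ {i}, h' j = ∑ j, h' j := by
        refine Finset.sum_subset (Finset.subset_univ _) (fun j _ hj => ?_)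
        by_cases hji : j = i
        · rw [hji]; exact h'i
        · have hjn : j ∉ Sn k n := fun hmem =>
            hj (Finset.mem_sdiff.2 ⟨hmem, by simpa using hji⟩)
          have hlt : ¬ n ≤ (j : ℕ) := fun hle => hjn (mem_Sn.2 hle)
          exact h0' j (by omega)
      rw [this, ← hsum', hez]
    refine ⟨h, ?_, ?_, ?_, ?_⟩
    · intro j
      by_cases hj : j = i
      · rw [hj, hh, Function.update_self]; exact heC
      · rw [hupd j hj]; exact hC' j
    · intro j hj
      have hji : j ≠ i := by intro he; rw [he] at hj; exact absurd hj (lt_irrefl m)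
      rw [hupd j hji]
      exact h0' j (by omega)
    · have := hSn 0 (by omega)
      rw [Sn_zero] at this
      exact this.symm
    · intro n j hj q hq
      by_cases hnm : n ≤ m
      · rw [hSn n hnm]
        exact hx j (by omega) q hq
      · have hiSn : i ∉ Sn k n := fun hmem => by
          have : n ≤ m := mem_Sn.1 hmem
          omega
        have : ∑ j ∈ Sn k n, h j = ∑ j ∈ Sn k n, h' j := by
          refine Finset.sum_congr rfl (fun j' hj' => ?_)
          refine hupd j' (fun he => hiSn (he ▸ hj'))
        rw [this]
        exact htail' n j hj q hq

end Build

section Uniq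
variable {M : Type*} [AddCancelCommMonoid M] {k : ℕ} {Hs : Fin k → Set M}

lemma tail_nondvd (hred : ∀ a b : M, a + b = 0 → a = 0)
    (hunion : (⋃ i, Hs i) = {a : M | IsAtomM a}) (g : Fin k → M)
    (htail : ∀ i : Fin k, 0 < (i : ℕ) →
      ∀ q ∈ (⋃ j ∈ {j : Fin k | j < i}, Hs j), ¬ MDvd q
        (∑ j ∈ Finset.univ.filter (fun j => i ≤ j), g j)) :
    ∀ n : ℕ, 0 < n → ∀ j : Fin k, (j : ℕ) < n → ∀ q ∈ Hs j,
      ¬ MDvd q (∑ j' ∈ Sn k n, g j') := by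
  intro n hn j hj q hq
  by_cases hnk : n < k
  · have := htail ⟨n, hnk⟩ hn q
      (Set.mem_biUnion (show j < (⟨n, hnk⟩ : Fin k) from hj) hq)
    rwa [← Sn_eq_filter ⟨n, hnk⟩] at this
  · rw [Sn_empty (by omega), Finset.sum_empty]
    exact not_mdvd_zero hred (atom_of_mem_Hs hunion hq).1

end Uniq


/-- if the set of atoms of an atomic monoid `M` admits a stratification
`H = H₁ ∪ ⋯ ∪ H_k` (each `⟨Hᵢ⟩` factorial, `Hᵢ` linked to `Mᵢ = ⟨Hᵢ ∪ ⋯ ∪ H_k⟩`)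
such that distinct elements of `Hᵢ` are coprime in `Mᵢ`, then every `x ∈ M` has a
unique representation `x = h₁ + ⋯ + h_k` with `hᵢ ∈ ⟨Hᵢ⟩` and
`hᵢ + ⋯ + h_k ∈ Ap(M, H₁ ∪ ⋯ ∪ H_{i-1})` for `i ≥ 2`. -/
theorem stratification_unique_representation {M : Type*} [AddCancelCommMonoid M]
    (hred : ∀ a b : M, a + b = 0 → a = 0)
    (hatomic : AtomicM M)
    (k : ℕ) (Hs : Fin k → Set M)
    (hdisj : ∀ i j, i ≠ j → Disjoint (Hs i) (Hs j))
    (hunion : (⋃ i, Hs i) = {a : M | IsAtomM a})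
    (hfree : ∀ i, FreeOn (Hs i))
    (hlink : ∀ i : Fin k,
      LinkedIn (AddSubmonoid.closure (⋃ j ∈ {j : Fin k | i ≤ j}, Hs j)) (Hs i))
    (hcop : ∀ i : Fin k, ∀ q ∈ Hs i, ∀ q' ∈ Hs i, q ≠ q' →
      CoprimeIn (AddSubmonoid.closure (⋃ j ∈ {j : Fin k | i ≤ j}, Hs j)) q q') :
    ∀ x : M, ∃! h : Fin k → M,
      (∀ i, h i ∈ AddSubmonoid.closure (Hs i)) ∧
      x = ∑ i, h i ∧
      ∀ i : Fin k, 0 < (i : ℕ) →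
        (∑ j ∈ Finset.univ.filter fun j => i ≤ j, h j) ∈
          AperyM (⋃ j ∈ {j : Fin k | j < i}, Hs j) := by
  intro x
  obtain ⟨h, hC, h0, hsum, htail⟩ := exists_tail hred hatomic hunion hlink k 0
    (by omega) x (fun j hj => absurd hj (by omega))
  refine ⟨h, ⟨hC, hsum, ?_⟩, ?_⟩
  · intro i hi q hq
    obtain ⟨j, hji, hqj⟩ := Set.mem_iUnion₂.1 hq
    have := htail (i : ℕ) j hji q hqj
    rwa [Sn_eq_filter i] at this
  · rintro h' ⟨hC', hsum', htail'⟩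
    have tnd : ∀ n : ℕ, ∀ j : Fin k, (j : ℕ) < n → ∀ q ∈ Hs j,
        ¬ MDvd q (∑ j' ∈ Sn k n, h j') := fun n j hj q hq => htail n j hj q hq
    have tnd' := tail_nondvd hred hunion h' htail'
    have claim : ∀ n : ℕ, n ≤ k →
        (∑ j ∈ Sn k n, h' j = ∑ j ∈ Sn k n, h j) ∧
        ∀ j : Fin k, (j : ℕ) < n → h' j = h j := by
      intro n
      induction n with
      | zero =>
        intro _
        exact ⟨by simp only [Sn_zero]; rw [← hsum, ← hsum'], fun j hj => absurd hj (by omega)⟩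
      | succ n ihn =>
        intro hn1
        have hnk : n < k := by omega
        obtain ⟨hT, hprev⟩ := ihn (by omega)
        set i : Fin k := ⟨n, hnk⟩ with hidef
        obtain ⟨hins, hnotmem⟩ := Sn_insert hnk
        rw [hins, Finset.sum_insert hnotmem, Finset.sum_insert hnotmem] at hT
        have hQN : Hs i ⊆ (AddSubmonoid.closure (⋃ j ∈ {j : Fin k | i ≤ j}, Hs j) :
            AddSubmonoid M) := fun q hq =>
          AddSubmonoid.subset_closure (Set.mem_biUnion (le_refl i) hq)
        obtain ⟨f, hf, hfe⟩ := mem_closure_iff_fsum.1 (hC i)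
        obtain ⟨g, hg, hge⟩ := mem_closure_iff_fsum.1 (hC' i)
        have hAu : ∀ q ∈ Hs i, ¬ MDvd q (∑ j ∈ Sn k (n + 1), h j) :=
          fun q hq => tnd (n + 1) i (Nat.lt_succ_self n) q hq
        have hAu' : ∀ q ∈ Hs i, ¬ MDvd q (∑ j ∈ Sn k (n + 1), h' j) :=
          fun q hq => tnd' (n + 1) (by omega) i (Nat.lt_succ_self n) q hq
        have huN : (∑ j ∈ Sn k (n + 1), h j) ∈
            AddSubmonoid.closure (⋃ j ∈ {j : Fin k | i ≤ j}, Hs j) :=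
          mem_Mi hatomic hunion i _ (fun j hj q hq =>
            tnd (n + 1) j (by have h2 : (j : ℕ) < n := hj; omega) q hq)
        have hu'N : (∑ j ∈ Sn k (n + 1), h' j) ∈
            AddSubmonoid.closure (⋃ j ∈ {j : Fin k | i ≤ j}, Hs j) :=
          mem_Mi hatomic hunion i _ (fun j hj q hq =>
            tnd' (n + 1) (by omega) j (by have h2 : (j : ℕ) < n := hj; omega) q hq)
        obtain ⟨hgf, huv⟩ := keyCancel hQN (hcop i) (wtF g) g f rfl hg hf
          (∑ j ∈ Sn k (n + 1), h' j) (∑ j ∈ Sn k (n + 1), h j) hu'N huN hAu' hAu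
          (by rw [hge, hfe]; exact hT)
        refine ⟨huv, fun j hj => ?_⟩
        rcases Nat.lt_succ_iff_lt_or_eq.1 hj with hlt | heq
        · exact hprev j hlt
        · have hji : j = i := Fin.ext heq
          rw [hji, ← hge, ← hfe, hgf]
    funext j
    exact (claim k le_rfl).2 j j.isLt
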